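/- The groups W₆⁺ (signed 6×6 permutation matrices of determinant 1) and W₆' (signed 6×6 permutation matrices with evenly many sign changes, the type D₆ Weyl group) are not isomorphic. -/

import Mathlib

noncomputable section
open Matrix Complex

/-- The signed permutation matrix with underlying permutation `σ` and signs `a`. -/
def sp (σ : Equiv.Perm (Fin 6)) (a : Fin 6 → ℂ) : Matrix (Fin 6) (Fin 6) ℂ :=
  Matrix.of fun i j => if i = σ j then a j else 0

/-- All entries are `±1`. -/
def signs (a : Fin 6 → ℂ) : Prop := ∀ k, a k = 1 ∨ a k = -1

/-- The Weyl group of type `B₆`: all signed permutation matrices. -/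
def W6Set : Set (GL (Fin 6) ℂ) :=
  {g | ∃ σ a, signs a ∧ (g : Matrix (Fin 6) (Fin 6) ℂ) = sp σ a}

/-- `W₆⁺`: signed permutation matrices of determinant 1. -/
def W6plusSet : Set (GL (Fin 6) ℂ) :=
  {g | ∃ σ a, signs a ∧ (g : Matrix (Fin 6) (Fin 6) ℂ) = sp σ a ∧
    (g : Matrix (Fin 6) (Fin 6) ℂ).det = 1}

/-- `W₆'` (type `D₆`): signed permutation matrices with product of entries 1. -/
def W6'Set : Set (GL (Fin 6) ℂ) :=
  {g | ∃ σ a, signs a ∧ (∏ k, a k) = 1 ∧ (g : Matrix (Fin 6) (Fin 6) ℂ) = sp σ a}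

/-- `A₆'`: diagonal sign matrices with product of entries 1. -/
def A6'Set : Set (GL (Fin 6) ℂ) :=
  {g | ∃ a, signs a ∧ (∏ k, a k) = 1 ∧ (g : Matrix (Fin 6) (Fin 6) ℂ) = Matrix.diagonal a}

/-- `i · Id` as an element of `GL₆(ℂ)`. -/
def iId : GL (Fin 6) ℂ :=
  ⟨Matrix.diagonal (fun _ => Complex.I), Matrix.diagonal (fun _ => -Complex.I),
    by simp [Matrix.diagonal_mul_diagonal, Complex.I_mul_I],
    by simp [Matrix.diagonal_mul_diagonal, Complex.I_mul_I]⟩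

/-- For a monomial matrix, the product of its nonzero entries (γ). -/
def gam (m : Matrix (Fin 6) (Fin 6) ℂ) : ℂ := ∏ j, ∑ i, m i j

/-- `𝒲₆ = ⟨W₆⁺, i·Id⟩`. -/
def CW6Sub : Subgroup (GL (Fin 6) ℂ) := Subgroup.closure (W6plusSet ∪ {iId})

/-- `𝒲₆' = 𝒲₆ ∩ ker γ`. -/
def CW6'Set : Set (GL (Fin 6) ℂ) :=
  {g | g ∈ CW6Sub ∧ gam (g : Matrix (Fin 6) (Fin 6) ℂ) = 1}

def CW6'Sub : Subgroup (GL (Fin 6) ℂ) := Subgroup.closure CW6'Set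

def W6Sub : Subgroup (GL (Fin 6) ℂ) := Subgroup.closure W6Set
def W6plusSub : Subgroup (GL (Fin 6) ℂ) := Subgroup.closure W6plusSet
def W6'Sub : Subgroup (GL (Fin 6) ℂ) := Subgroup.closure W6'Set

section AuxSP
open scoped Classical

lemma sp_mul (σ τ : Equiv.Perm (Fin 6)) (a b : Fin 6 → ℂ) :
    sp σ a * sp τ b = sp (σ * τ) (fun j => a (τ j) * b j) := by
  ext i j
  simp only [sp, Matrix.mul_apply, Matrix.of_apply]
  rw [Finset.sum_eq_single (τ j)]
  · simp [Equiv.Perm.mul_apply, ite_mul]; exact if_congr Iff.rfl rfl rfl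
  · intro k _ hk; simp [hk]
  · simp

lemma sp_one : sp 1 (fun _ => (1:ℂ)) = 1 := by
  ext i j
  simp [sp, Matrix.one_apply, eq_comm]; exact if_congr Iff.rfl rfl rfl

lemma sp_inj {σ τ : Equiv.Perm (Fin 6)} {a b : Fin 6 → ℂ} (hb : ∀ j, b j ≠ 0)
    (h : sp σ a = sp τ b) : σ = τ ∧ a = b := by
  have hστ : σ = τ := by
    apply Equiv.ext
    intro j
    by_contra hne
    have h2 := congrFun (congrFun h (τ j)) j
    simp only [sp, Matrix.of_apply, if_pos rfl] at h2
    rw [if_neg (fun hc => hne hc.symm)] at h2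
    exact hb j h2.symm
  subst hστ
  refine ⟨rfl, funext fun j => ?_⟩
  have h2 := congrFun (congrFun h (σ j)) j
  simpa [sp] using h2

lemma signs_sq {a : Fin 6 → ℂ} (ha : signs a) (k : Fin 6) : a k * a k = 1 := by
  rcases ha k with h | h <;> rw [h] <;> norm_num

/-- `W6'Set` as a subgroup. -/
def Hd : Subgroup (GL (Fin 6) ℂ) where
  carrier := W6'Set
  one_mem' := ⟨1, fun _ => 1, fun _ => Or.inl rfl, by simp, by rw [sp_one]; rfl⟩
  mul_mem' := by
    rintro g h ⟨σ, a, ha, hpa, hg⟩ ⟨τ, b, hb, hpb, hh⟩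
    refine ⟨σ * τ, fun j => a (τ j) * b j, ?_, ?_, ?_⟩
    · intro k
      rcases ha (τ k) with h1 | h1 <;> rcases hb k with h2 | h2 <;> simp [h1, h2]
    · rw [Finset.prod_mul_distrib, Equiv.prod_comp τ a, hpa, hpb, one_mul]
    · rw [Units.val_mul, hg, hh, sp_mul]
  inv_mem' := by
    rintro g ⟨σ, a, ha, hpa, hg⟩
    refine ⟨σ⁻¹, fun j => a (σ⁻¹ j), fun k => ha _, ?_, ?_⟩
    · rw [Equiv.prod_comp σ⁻¹ a]; exact hpa
    · have h1 : (g : Matrix (Fin 6) (Fin 6) ℂ) * sp σ⁻¹ (fun j => a (σ⁻¹ j)) = 1 := by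
        rw [hg, sp_mul]
        have : (fun j => a (σ⁻¹ j) * a (σ⁻¹ j)) = fun _ => (1:ℂ) :=
          funext fun j => signs_sq ha _
        rw [this, mul_inv_cancel, sp_one]
      calc (↑g⁻¹ : Matrix (Fin 6) (Fin 6) ℂ)
          = ↑g⁻¹ * ((g : Matrix (Fin 6) (Fin 6) ℂ) * sp σ⁻¹ (fun j => a (σ⁻¹ j))) := by
            rw [h1, mul_one]
        _ = (↑g⁻¹ * (g : Matrix (Fin 6) (Fin 6) ℂ)) * sp σ⁻¹ (fun j => a (σ⁻¹ j)) := by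
            rw [mul_assoc]
        _ = sp σ⁻¹ (fun j => a (σ⁻¹ j)) := by rw [Units.inv_mul, one_mul]

set_option maxRecDepth 10000 in
/-- `W6plusSet` as a subgroup. -/
def Hp : Subgroup (GL (Fin 6) ℂ) where
  carrier := W6plusSet
  one_mem' := ⟨1, fun _ => 1, fun _ => Or.inl rfl, by rw [sp_one]; rfl, by simp⟩
  mul_mem' := by
    rintro g h ⟨σ, a, ha, hg, hdg⟩ ⟨τ, b, hb, hh, hdh⟩
    refine ⟨σ * τ, fun j => a (τ j) * b j, ?_, ?_, ?_⟩
    · intro k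
      rcases ha (τ k) with h1 | h1 <;> rcases hb k with h2 | h2 <;> simp [h1, h2]
    · rw [Units.val_mul, hg, hh, sp_mul]
    · rw [Units.val_mul, Matrix.det_mul, hdg, hdh, one_mul]
  inv_mem' := by
    rintro g ⟨σ, a, ha, hg, hdg⟩
    have h1 : (g : Matrix (Fin 6) (Fin 6) ℂ) * sp σ⁻¹ (fun j => a (σ⁻¹ j)) = 1 := by
      rw [hg, sp_mul]
      have : (fun j => a (σ⁻¹ j) * a (σ⁻¹ j)) = fun _ => (1:ℂ) :=
        funext fun j => signs_sq ha _
      rw [this, mul_inv_cancel, sp_one]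
    have h2 : (↑g⁻¹ : Matrix (Fin 6) (Fin 6) ℂ) = sp σ⁻¹ (fun j => a (σ⁻¹ j)) := by
      calc (↑g⁻¹ : Matrix (Fin 6) (Fin 6) ℂ)
          = ↑g⁻¹ * ((g : Matrix (Fin 6) (Fin 6) ℂ) * sp σ⁻¹ (fun j => a (σ⁻¹ j))) := by
            rw [h1, mul_one]
        _ = (↑g⁻¹ * (g : Matrix (Fin 6) (Fin 6) ℂ)) * sp σ⁻¹ (fun j => a (σ⁻¹ j)) := by
            rw [mul_assoc]
        _ = sp σ⁻¹ (fun j => a (σ⁻¹ j)) := by rw [Units.inv_mul, one_mul]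
    refine ⟨σ⁻¹, fun j => a (σ⁻¹ j), fun k => ha _, h2, ?_⟩
    have h3 : (↑g⁻¹ : Matrix (Fin 6) (Fin 6) ℂ).det * (g : Matrix (Fin 6) (Fin 6) ℂ).det = 1 := by
      rw [← Matrix.det_mul, Units.inv_mul, Matrix.det_one]
    rw [hdg, mul_one] at h3
    exact h3

set_option maxRecDepth 4000 in
lemma mem_d (g : GL (Fin 6) ℂ) : g ∈ W6'Sub ↔ g ∈ W6'Set := by
  have h : W6'Sub = Hd := Subgroup.closure_eq Hd
  rw [h]; rfl

set_option maxRecDepth 4000 in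
lemma mem_p (g : GL (Fin 6) ℂ) : g ∈ W6plusSub ↔ g ∈ W6plusSet := by
  have h : W6plusSub = Hp := Subgroup.closure_eq Hp
  rw [h]; rfl

end AuxSP

section AuxCount
open scoped Classical

/-- Encode a sign vector by a Boolean vector. -/
def toC (b : Fin 6 → Bool) : Fin 6 → ℂ := fun j => if b j then -1 else 1

lemma toC_signs (b : Fin 6 → Bool) : signs (toC b) := by
  intro k; by_cases h : b k <;> simp [toC, h]

lemma toC_ne_zero (b : Fin 6 → Bool) (j : Fin 6) : toC b j ≠ 0 := by
  by_cases h : b j <;> simp [toC, h]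

lemma toC_inj {b b' : Fin 6 → Bool} (h : toC b = toC b') : b = b' := by
  funext j
  have h2 := congrFun h j
  by_cases h1 : b j <;> by_cases h1' : b' j <;>
    simp [toC, h1, h1'] at h2 ⊢ <;> norm_num at h2

lemma toC_prod (b : Fin 6 → Bool) :
    (∏ k, toC b k) =
      if (Finset.univ.filter (fun j => b j)).card % 2 = 0 then 1 else -1 := by
  have h1 : (∏ k, toC b k) = (-1 : ℂ) ^ ((Finset.univ.filter (fun j => b j)).card) := by
    unfold toC
    rw [Finset.prod_ite, Finset.prod_const, Finset.prod_const_one, mul_one]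
  rw [h1]
  rcases Nat.even_or_odd ((Finset.univ.filter (fun j => b j)).card) with h | h
  · rw [h.neg_one_pow, if_pos (Nat.even_iff.mp h)]
  · rw [h.neg_one_pow, if_neg (by rw [← Nat.even_iff]; exact (Nat.not_even_iff_odd.mpr h))]

lemma sp_eq_perm_mul_diag (σ : Equiv.Perm (Fin 6)) (a : Fin 6 → ℂ) :
    sp σ a = (Equiv.Perm.permMatrix ℂ σ⁻¹) * Matrix.diagonal a := by
  ext i j
  rw [Matrix.mul_diagonal]
  by_cases h : i = σ j
  · subst h
    simp [sp, Equiv.Perm.permMatrix, PEquiv.toMatrix_apply, Equiv.toPEquiv_apply]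
  · have h' : ¬ σ⁻¹ i = j := fun hc => h (by rw [← hc]; simp)
    simp [sp, h, Equiv.Perm.permMatrix, PEquiv.toMatrix_apply, Equiv.toPEquiv_apply, h']
    exact fun hc => absurd hc h'

lemma sp_det (σ : Equiv.Perm (Fin 6)) (a : Fin 6 → ℂ) :
    (sp σ a).det = (Equiv.Perm.sign σ : ℂ) * ∏ k, a k := by
  rw [sp_eq_perm_mul_diag, Matrix.det_mul, Matrix.det_permutation, Matrix.det_diagonal,
    Equiv.Perm.sign_inv]

lemma det_toC (σ : Equiv.Perm (Fin 6)) (b : Fin 6 → Bool) :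
    (sp σ (toC b)).det = 1 ↔
      (Equiv.Perm.sign σ = 1 ↔ (Finset.univ.filter (fun j => b j)).card % 2 = 0) := by
  rw [sp_det, toC_prod]
  rcases Int.units_eq_one_or (Equiv.Perm.sign σ) with h | h <;> rw [h] <;>
    by_cases hc : (Finset.univ.filter (fun j => b j)).card % 2 = 0 <;>
      simp [hc] <;> norm_num

end AuxCount

section AuxEquiv
set_option maxRecDepth 10000

set_option maxRecDepth 100000 in
set_option maxHeartbeats 4000000 in
lemma sumD : (∑ σ : Equiv.Perm (Fin 6), if σ * σ = 1 then
    (∑ b : Fin 6 → Bool, if (∀ j, b (σ j) = b j) ∧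
      (Finset.univ.filter (fun j => b j)).card % 2 = 0 then 1 else 0)
    else 0) = 752 := by decide

set_option maxRecDepth 100000 in
set_option maxHeartbeats 4000000 in
lemma sumP : (∑ σ : Equiv.Perm (Fin 6), if σ * σ = 1 then
    (if Equiv.Perm.sign σ = 1 then
      (∑ b : Fin 6 → Bool, if (∀ j, b (σ j) = b j) ∧
        (Finset.univ.filter (fun j => b j)).card % 2 = 0 then 1 else 0)
     else
      (∑ b : Fin 6 → Bool, if (∀ j, b (σ j) = b j) ∧
        ¬((Finset.univ.filter (fun j => b j)).card % 2 = 0) then 1 else 0))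
    else 0) = 632 := by decide

lemma cardD_param : Nat.card {p : Equiv.Perm (Fin 6) × (Fin 6 → Bool) //
    (p.1 * p.1 = 1 ∧ ∀ j, p.2 (p.1 j) = p.2 j) ∧
      (Finset.univ.filter (fun j => p.2 j)).card % 2 = 0} = 752 := by
  rw [Nat.card_eq_fintype_card, Fintype.card_subtype, Finset.card_filter,
    Fintype.sum_prod_type, ← sumD]
  refine Finset.sum_congr rfl fun σ _ => ?_
  by_cases h : σ * σ = 1 <;> simp [h]

lemma cardP_param : Nat.card {p : Equiv.Perm (Fin 6) × (Fin 6 → Bool) //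
    (p.1 * p.1 = 1 ∧ ∀ j, p.2 (p.1 j) = p.2 j) ∧
      (Equiv.Perm.sign p.1 = 1 ↔ (Finset.univ.filter (fun j => p.2 j)).card % 2 = 0)} = 632 := by
  rw [Nat.card_eq_fintype_card, Fintype.card_subtype, Finset.card_filter,
    Fintype.sum_prod_type, ← sumP]
  refine Finset.sum_congr rfl fun σ _ => ?_
  by_cases h : σ * σ = 1 <;> by_cases hs : Equiv.Perm.sign σ = 1 <;> simp [h, hs]

lemma sq_one_cond {σ : Equiv.Perm (Fin 6)} {b : Fin 6 → Bool}
    (h1 : σ * σ = 1) (h2 : ∀ j, b (σ j) = b j) :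
    sp σ (toC b) * sp σ (toC b) = 1 := by
  rw [sp_mul]
  have e1 : (fun j => toC b (σ j) * toC b j) = fun _ => (1:ℂ) := funext fun j => by
    rw [show toC b (σ j) = toC b j from by unfold toC; rw [h2 j]]
    exact signs_sq (toC_signs b) j
  rw [e1, h1, sp_one]

/-- The unit given by an involutive signed permutation matrix. -/
def invUnit (σ : Equiv.Perm (Fin 6)) (b : Fin 6 → Bool)
    (h : sp σ (toC b) * sp σ (toC b) = 1) : GL (Fin 6) ℂ :=
  ⟨sp σ (toC b), sp σ (toC b), h, h⟩

def fD (p : {p : Equiv.Perm (Fin 6) × (Fin 6 → Bool) //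
    (p.1 * p.1 = 1 ∧ ∀ j, p.2 (p.1 j) = p.2 j) ∧
      (Finset.univ.filter (fun j => p.2 j)).card % 2 = 0}) :
    {g : ↥W6'Sub // g * g = 1} :=
  ⟨⟨invUnit p.1.1 p.1.2 (sq_one_cond p.2.1.1 p.2.1.2),
    (mem_d _).mpr ⟨p.1.1, toC p.1.2, toC_signs _, by rw [toC_prod, if_pos p.2.2], rfl⟩⟩,
    by
      apply Subtype.ext
      apply Units.ext
      exact sq_one_cond p.2.1.1 p.2.1.2⟩

lemma fD_inj : Function.Injective fD := by
  rintro ⟨⟨σ, b⟩, hp⟩ ⟨⟨τ, c⟩, hq⟩ h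
  have h1 : sp σ (toC b) = sp τ (toC c) :=
    congrArg (fun x => ((x.1 : GL (Fin 6) ℂ) : Matrix (Fin 6) (Fin 6) ℂ)) h
  obtain ⟨h2, h3⟩ := sp_inj (toC_ne_zero c) h1
  exact Subtype.ext (Prod.ext h2 (toC_inj h3))

lemma fD_surj : Function.Surjective fD := by
  rintro ⟨⟨g, hg⟩, hsq⟩
  obtain ⟨σ, a, ha, hpa, hga⟩ := (mem_d g).mp hg
  classical
  set b : Fin 6 → Bool := fun j => if a j = 1 then false else true with hb
  have hab : toC b = a := by
    funext j
    by_cases h : a j = 1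
    · simp [toC, hb, h]
    · have h' : a j = -1 := (ha j).resolve_left h
      have hbj : b j = true := by simp [hb, h]
      simp [toC, hbj, h']
  have h0 : g * g = 1 := congrArg Subtype.val hsq
  have h1 : sp σ a * sp σ a = 1 := by
    have h2 := congrArg Units.val h0
    rw [Units.val_mul, hga] at h2
    simpa using h2
  rw [sp_mul] at h1
  obtain ⟨hσ, hc⟩ := sp_inj (fun j => one_ne_zero) (h1.trans sp_one.symm)
  have hfix : ∀ j, a (σ j) * a j = 1 := fun j => congrFun hc j
  have haσ : ∀ j, a (σ j) = a j := by
    intro j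
    have h3 := hfix j
    rcases ha j with h1' | h1' <;> rcases ha (σ j) with h2' | h2' <;>
      rw [h1', h2'] <;> rw [h1', h2'] at h3 <;> norm_num at h3
  have hbσ : ∀ j, b (σ j) = b j := by
    intro j
    simp only [hb, haσ j]
  have hpar : (Finset.univ.filter (fun j => b j)).card % 2 = 0 := by
    rw [← hab, toC_prod] at hpa
    by_cases hp : (Finset.univ.filter (fun j => b j)).card % 2 = 0
    · exact hp
    · rw [if_neg hp] at hpa; norm_num at hpa
  refine ⟨⟨(σ, b), ⟨⟨hσ, hbσ⟩, hpar⟩⟩, ?_⟩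
  apply Subtype.ext
  apply Subtype.ext
  apply Units.ext
  show sp σ (toC b) = ↑g
  rw [hab, hga]

lemma cardInvD : Nat.card {g : ↥W6'Sub // g * g = 1} = 752 := by
  rw [← cardD_param]
  exact (Nat.card_congr (Equiv.ofBijective fD ⟨fD_inj, fD_surj⟩)).symm

def fP (p : {p : Equiv.Perm (Fin 6) × (Fin 6 → Bool) //
    (p.1 * p.1 = 1 ∧ ∀ j, p.2 (p.1 j) = p.2 j) ∧
      (Equiv.Perm.sign p.1 = 1 ↔ (Finset.univ.filter (fun j => p.2 j)).card % 2 = 0)}) :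
    {g : ↥W6plusSub // g * g = 1} :=
  ⟨⟨invUnit p.1.1 p.1.2 (sq_one_cond p.2.1.1 p.2.1.2),
    (mem_p _).mpr ⟨p.1.1, toC p.1.2, toC_signs _, rfl, (det_toC p.1.1 p.1.2).mpr p.2.2⟩⟩,
    by
      apply Subtype.ext
      apply Units.ext
      exact sq_one_cond p.2.1.1 p.2.1.2⟩

lemma fP_inj : Function.Injective fP := by
  rintro ⟨⟨σ, b⟩, hp⟩ ⟨⟨τ, c⟩, hq⟩ h
  have h1 : sp σ (toC b) = sp τ (toC c) :=
    congrArg (fun x => ((x.1 : GL (Fin 6) ℂ) : Matrix (Fin 6) (Fin 6) ℂ)) h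
  obtain ⟨h2, h3⟩ := sp_inj (toC_ne_zero c) h1
  exact Subtype.ext (Prod.ext h2 (toC_inj h3))

lemma fP_surj : Function.Surjective fP := by
  rintro ⟨⟨g, hg⟩, hsq⟩
  obtain ⟨σ, a, ha, hga, hdet⟩ := (mem_p g).mp hg
  classical
  set b : Fin 6 → Bool := fun j => if a j = 1 then false else true with hb
  have hab : toC b = a := by
    funext j
    by_cases h : a j = 1
    · simp [toC, hb, h]
    · have h' : a j = -1 := (ha j).resolve_left h
      have hbj : b j = true := by simp [hb, h]
      simp [toC, hbj, h']
  have h0 : g * g = 1 := congrArg Subtype.val hsq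
  have h1 : sp σ a * sp σ a = 1 := by
    have h2 := congrArg Units.val h0
    rw [Units.val_mul, hga] at h2
    simpa using h2
  rw [sp_mul] at h1
  obtain ⟨hσ, hc⟩ := sp_inj (fun j => one_ne_zero) (h1.trans sp_one.symm)
  have hfix : ∀ j, a (σ j) * a j = 1 := fun j => congrFun hc j
  have haσ : ∀ j, a (σ j) = a j := by
    intro j
    have h3 := hfix j
    rcases ha j with h1' | h1' <;> rcases ha (σ j) with h2' | h2' <;>
      rw [h1', h2'] <;> rw [h1', h2'] at h3 <;> norm_num at h3
  have hbσ : ∀ j, b (σ j) = b j := by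
    intro j
    simp only [hb, haσ j]
  have hsgn : Equiv.Perm.sign σ = 1 ↔ (Finset.univ.filter (fun j => b j)).card % 2 = 0 := by
    apply (det_toC σ b).mp
    rw [hab, ← hga]
    exact hdet
  refine ⟨⟨(σ, b), ⟨⟨hσ, hbσ⟩, hsgn⟩⟩, ?_⟩
  apply Subtype.ext
  apply Subtype.ext
  apply Units.ext
  show sp σ (toC b) = ↑g
  rw [hab, hga]

lemma cardInvP : Nat.card {g : ↥W6plusSub // g * g = 1} = 632 := by
  rw [← cardP_param]
  exact (Nat.card_congr (Equiv.ofBijective fP ⟨fP_inj, fP_surj⟩)).symm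

end AuxEquiv

/-- The groups `W₆⁺` (signed permutation matrices of determinant 1) and `W₆'`
(type `D₆` Weyl group) are not isomorphic. -/
theorem stmt_13 : IsEmpty (↥W6plusSub ≃* ↥W6'Sub) := by
  refine ⟨fun e => ?_⟩
  have hcard : Nat.card {g : ↥W6plusSub // g * g = 1}
      = Nat.card {g : ↥W6'Sub // g * g = 1} := by
    apply Nat.card_congr
    refine ⟨fun p => ⟨e p.1, by rw [← _root_.map_mul, p.2, _root_.map_one]⟩,
      fun q => ⟨e.symm q.1, by rw [← _root_.map_mul, q.2, _root_.map_one]⟩,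
      fun p => Subtype.ext (e.symm_apply_apply p.1),
      fun q => Subtype.ext (e.apply_symm_apply q.1)⟩
  rw [cardInvP, cardInvD] at hcard
  norm_num at hcard
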